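/- There exists a finite single-player perception game in which the utility is lower semicontinuous (but not continuous) in the perception argument and which has no perception equilibrium. Concretely: T = {ℓ, r}, β uniform, A = {L, R}, base utility 1 if the action matches the type and 0 otherwise, with additional disutility −2 for both types when p = 1/2, additional disutility −2 for type r when p = 1, and additional disutility −2 for type ℓ when p = 0 (where p denotes the perceived probability of type r). This game admits no perception equilibrium. -/

import Mathlib

open Finset

section PerceptionGame
variable {T A : Type*} [Fintype T] [Fintype A]

/-- Total probability of action `a` under prior `β` and strategy `σ`. -/
def actProb (β : T → ℝ) (σ : T → A → ℝ) (a : A) : ℝ := ∑ t, β t * σ t a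

/-- Bayesian consistency of a perception with the prior and strategy. -/
def Consistent (β : T → ℝ) (σ : T → A → ℝ) (τ : T → A → T → ℝ) : Prop :=
  ∀ a, 0 < actProb β σ a → ∀ t tb, τ t a tb = β tb * σ tb a / actProb β σ a

/-- Expected utility of type `t` playing mixed action `s`, given perception `τ`. -/
def ExpUtil (u : T → A → (T → ℝ) → ℝ) (τ : T → A → T → ℝ) (t : T) (s : A → ℝ) : ℝ :=
  ∑ a, s a * u t a (τ t a)

/-- Perception equilibrium: a consistent strategy–perception pair where
every type's strategy is a best reply. -/
def PerceptionEqm (β : T → ℝ) (u : T → A → (T → ℝ) → ℝ)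
    (σ : T → A → ℝ) (τ : T → A → T → ℝ) : Prop :=
  (∀ t, σ t ∈ stdSimplex ℝ A) ∧ (∀ t a, τ t a ∈ stdSimplex ℝ T) ∧
  Consistent β σ τ ∧
  ∀ t, ∀ s ∈ stdSimplex ℝ A, ExpUtil u τ t s ≤ ExpUtil u τ t (σ t)

end PerceptionGame

/-- Disutility terms: `true = ℓ`, `false = r`; `p` is the perceived probability
of type `r`. -/
noncomputable def dDis (t : Bool) (p : ℝ) : ℝ :=
  if t then (if p = 1/2 ∨ p = 0 then -2 else 0)
  else (if p = 1/2 ∨ p = 1 then -2 else 0)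

/-- Discontinuous variant of Alice's game: actions `true = L`, `false = R`. -/
noncomputable def discU (t a : Bool) (μ : Bool → ℝ) : ℝ :=
  (if t = a then 1 else 0) + dDis t (μ false)


-- Auxiliary lemmas --

lemma dDis_bounds (t : Bool) (p : ℝ) : -2 ≤ dDis t p ∧ dDis t p ≤ 0 := by
  unfold dDis; cases t <;> split_ifs <;> norm_num
lemma dDis_true_pos {p : ℝ} (h : p = 1/2 ∨ p = 0) : dDis true p = -2 := by
  rcases h with h | h <;> simp [dDis, h]
lemma dDis_true_neg {p : ℝ} (h : ¬(p = 1/2 ∨ p = 0)) : dDis true p = 0 := by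
  unfold dDis
  rw [if_pos rfl, if_neg h]
lemma dDis_false_pos {p : ℝ} (h : p = 1/2 ∨ p = 1) : dDis false p = -2 := by
  rcases h with h | h <;> simp [dDis, h]
lemma dDis_false_neg {p : ℝ} (h : ¬(p = 1/2 ∨ p = 1)) : dDis false p = 0 := by
  unfold dDis
  rw [if_neg (by simp), if_neg h]
lemma mem_simplex_bool (f : Bool → ℝ) :
    f ∈ stdSimplex ℝ Bool ↔ (0 ≤ f true ∧ 0 ≤ f false) ∧ f true + f false = 1 := by
  constructor
  · rintro ⟨h1, h2⟩
    rw [Fintype.sum_bool] at h2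
    exact ⟨⟨h1 true, h1 false⟩, h2⟩
  · rintro ⟨⟨h1, h2⟩, h3⟩
    refine ⟨fun i => by cases i <;> assumption, ?_⟩
    rw [Fintype.sum_bool]; exact h3
lemma expUtil_bool (u : Bool → Bool → (Bool → ℝ) → ℝ) (τ : Bool → Bool → Bool → ℝ)
    (t : Bool) (s : Bool → ℝ) :
    ExpUtil u τ t s = s true * u t true (τ t true) + s false * u t false (τ t false) := by
  rw [ExpUtil, Fintype.sum_bool]
lemma br_dichotomy (u : Bool → Bool → (Bool → ℝ) → ℝ) (τ : Bool → Bool → Bool → ℝ)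
    (σ : Bool → Bool → ℝ) (t : Bool) (hσ : σ t ∈ stdSimplex ℝ Bool)
    (hbr : ∀ s ∈ stdSimplex ℝ Bool, ExpUtil u τ t s ≤ ExpUtil u τ t (σ t)) :
    (u t false (τ t false) < u t true (τ t true) → σ t true = 1) ∧
    (u t true (τ t true) < u t false (τ t false) → σ t true = 0) := by
  obtain ⟨⟨hp, hq⟩, hsum⟩ := (mem_simplex_bool _).1 hσ
  have hL : (fun a : Bool => if a then (1:ℝ) else 0) ∈ stdSimplex ℝ Bool := by
    rw [mem_simplex_bool]; norm_num
  have hR : (fun a : Bool => if a then (0:ℝ) else 1) ∈ stdSimplex ℝ Bool := by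
    rw [mem_simplex_bool]; norm_num
  have h1 := hbr _ hL
  have h2 := hbr _ hR
  rw [expUtil_bool, expUtil_bool] at h1 h2
  norm_num at h1 h2
  set A := u t true (τ t true)
  set B := u t false (τ t false)
  have hsub : σ t true = 1 - σ t false := by linarith
  rw [hsub] at h1 h2
  constructor
  · intro hAB
    have hle : σ t false ≤ 0 := by
      by_contra hcq
      push_neg at hcq
      have := mul_pos hcq (sub_pos.mpr hAB)
      nlinarith
    have h0 : σ t false = 0 := le_antisymm hle hq
    linarith
  · intro hAB
    have hle : σ t true ≤ 0 := by
      rw [hsub]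
      by_contra hcq
      push_neg at hcq
      have := mul_pos (show (0:ℝ) < 1 - σ t false by linarith) (sub_pos.mpr hAB)
      nlinarith
    exact le_antisymm hle hp

lemma lsc_aux (a b : ℝ) :
    LowerSemicontinuous (fun p : ℝ => if p = a ∨ p = b then (-2 : ℝ) else 0) := by
  intro x y hy
  by_cases hx : x = a ∨ x = b
  · have hy2 : y < -2 := by simpa [hx] using hy
    filter_upwards with z
    split_ifs <;> linarith
  · push_neg at hx
    have hy0 : y < 0 := by simpa [hx.1, hx.2] using hy
    filter_upwards [(eventually_ne_nhds hx.1).and (eventually_ne_nhds hx.2)] with z hz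
    rw [if_neg (not_or.mpr hz)]
    exact hy0

lemma lsc_dDis (t : Bool) : LowerSemicontinuous (fun p : ℝ => dDis t p) := by
  cases t
  · simpa [dDis] using lsc_aux (1/2) 1
  · simpa [dDis] using lsc_aux (1/2) 0

noncomputable def seqP (n : ℕ) : Bool → ℝ :=
  fun b => if b then 1/((n:ℝ)+3) else 1 - 1/((n:ℝ)+3)

noncomputable def muP : Bool → ℝ := fun b => if b then 0 else 1

/-- a game with lower-semicontinuous (but not continuous) utility
and no perception equilibrium. -/
theorem lsc_no_equilibrium :
    (∀ t a, LowerSemicontinuousOn (discU t a) (stdSimplex ℝ Bool)) ∧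
    ¬ (∀ t a, ContinuousOn (discU t a) (stdSimplex ℝ Bool)) ∧
    ¬ ∃ (σ : Bool → Bool → ℝ) (τ : Bool → Bool → Bool → ℝ),
        PerceptionEqm (fun _ => 1/2) discU σ τ := by
  refine ⟨?_, ?_, ?_⟩
  · -- lower semicontinuity
      intro t a
      have h1 : LowerSemicontinuous (fun μ : Bool → ℝ => dDis t (μ false)) :=
        LowerSemicontinuous.comp (lsc_dDis t) (continuous_apply false)
      have hc : LowerSemicontinuous (fun _ : Bool → ℝ => (if t = a then (1:ℝ) else 0)) :=
        lowerSemicontinuous_const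
      have h2 : LowerSemicontinuous (discU t a) := hc.add h1
      exact h2.lowerSemicontinuousOn _
  · -- not continuous
      intro h
      have hC := h false false
      have hmem : muP ∈ stdSimplex ℝ Bool := by
        rw [mem_simplex_bool]; norm_num [muP]
      have hpos : ∀ n : ℕ, (0:ℝ) < (n:ℝ) + 3 := fun n => by positivity
      have hle : ∀ n : ℕ, 1/((n:ℝ)+3) ≤ 1/3 := by
        intro n
        apply div_le_div_of_nonneg_left (by norm_num) (by norm_num)
        have := Nat.cast_nonneg (α := ℝ) n
        linarith
      have hmemn : ∀ n, seqP n ∈ stdSimplex ℝ Bool := by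
        intro n
        have h3 := hpos n
        have h4 := hle n
        have h5 : (0:ℝ) < 1/((n:ℝ)+3) := by positivity
        rw [mem_simplex_bool]
        refine ⟨⟨?_, ?_⟩, ?_⟩
        · show (0:ℝ) ≤ 1/((n:ℝ)+3); linarith
        · show (0:ℝ) ≤ 1 - 1/((n:ℝ)+3); linarith
        · show 1/((n:ℝ)+3) + (1 - 1/((n:ℝ)+3)) = 1; ring
      have htend0 : Filter.Tendsto (fun n : ℕ => 1/((n:ℝ)+3)) Filter.atTop (nhds 0) := by
        simp only [one_div]
        exact Filter.Tendsto.inv_tendsto_atTop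
          (Filter.tendsto_atTop_add_const_right _ 3 tendsto_natCast_atTop_atTop)
      have htend : Filter.Tendsto seqP Filter.atTop (nhds muP) := by
        rw [tendsto_pi_nhds]
        intro b
        cases b
        · show Filter.Tendsto (fun n : ℕ => 1 - 1/((n:ℝ)+3)) Filter.atTop (nhds (muP false))
          have h1 := Filter.Tendsto.const_sub 1 htend0
          simpa [muP] using h1
        · show Filter.Tendsto (fun n : ℕ => 1/((n:ℝ)+3)) Filter.atTop (nhds (muP true))
          simpa [muP] using htend0
      have htendW : Filter.Tendsto seqP Filter.atTop (nhdsWithin muP (stdSimplex ℝ Bool)) := by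
        rw [tendsto_nhdsWithin_iff]
        exact ⟨htend, Filter.Eventually.of_forall hmemn⟩
      have hlim := (hC muP hmem).tendsto.comp htendW
      have hval : ∀ n, discU false false (seqP n) = 1 := by
        intro n
        have h3 := hpos n
        have h4 := hle n
        have h5 : (0:ℝ) < 1/((n:ℝ)+3) := by positivity
        have hne1 : 1 - 1/((n:ℝ)+3) ≠ 1/2 := by intro hh; rw [sub_eq_iff_eq_add] at hh; linarith
        have hne2 : 1 - 1/((n:ℝ)+3) ≠ 1 := by intro hh; nlinarith
        have hsf : seqP n false = 1 - 1/((n:ℝ)+3) := rfl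
        simp only [discU, dDis, hsf]
        rw [if_neg (not_or.mpr ⟨hne1, hne2⟩)]
        norm_num
      have hval1 : discU false false muP = -1 := by
        have : muP false = 1 := rfl
        simp only [discU, dDis, this]
        norm_num
      rw [hval1] at hlim
      have hlim2 : Filter.Tendsto (fun _ : ℕ => (1:ℝ)) Filter.atTop (nhds (-1)) := by
        have he : (discU false false ∘ seqP) = fun _ : ℕ => (1:ℝ) := funext hval
        rwa [he] at hlim
      have := tendsto_nhds_unique hlim2 tendsto_const_nhds
      norm_num at this
  · -- no perception equilibrium
      rintro ⟨σ, τ, hσ, hτ, hcons, hbr⟩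
      obtain ⟨⟨hx0, hx'0⟩, hxs⟩ := (mem_simplex_bool _).1 (hσ true)
      obtain ⟨⟨hy0, hy'0⟩, hys⟩ := (mem_simplex_bool _).1 (hσ false)
      have hdl := br_dichotomy discU τ σ true (hσ true) (hbr true)
      have hdr := br_dichotomy discU τ σ false (hσ false) (hbr false)
      have hAP : ∀ a, actProb (fun _ : Bool => (1:ℝ)/2) σ a
          = 1/2 * σ true a + 1/2 * σ false a := fun a => by
        rw [actProb, Fintype.sum_bool]
      have elL : discU true true (τ true true) = 1 + dDis true (τ true true false) := by
        simp [discU]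
      have elR : discU true false (τ true false) = dDis true (τ true false false) := by
        simp [discU]
      have erL : discU false true (τ false true) = dDis false (τ false true false) := by
        simp [discU]
      have erR : discU false false (τ false false) = 1 + dDis false (τ false false false) := by
        simp [discU]
      rw [elL, elR] at hdl
      rw [erL, erR] at hdr
      have hx1 : σ true true ≤ 1 := by linarith
      have hy1 : σ false true ≤ 1 := by linarith
      rcases le_or_gt (σ true true + σ false true) 0 with hxy0 | hxyp
      · -- everyone plays R
        have hx : σ true true = 0 := le_antisymm (by linarith) hx0
        have hy : σ false true = 0 := le_antisymm (by linarith) hy0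
        have hPR : 0 < actProb (fun _ : Bool => (1:ℝ)/2) σ false := by
          rw [hAP]; nlinarith
        have hq2 : τ true false false = 1/2 := by
          rw [hcons false hPR true false, hAP]
          rw [show σ true false = 1 - σ true true by linarith,
            show σ false false = 1 - σ false true by linarith, hx, hy]
          norm_num
        have hc : σ true true = 1 := by
          apply hdl.1
          rw [hq2]
          have hb := dDis_bounds true (τ true true false)
          rw [dDis_true_pos (Or.inl rfl)]
          linarith
        rw [hx] at hc; norm_num at hc
      rcases le_or_gt 2 (σ true true + σ false true) with hxy2 | hxylt
      · -- everyone plays L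
        have hx : σ true true = 1 := le_antisymm hx1 (by linarith)
        have hy : σ false true = 1 := le_antisymm hy1 (by linarith)
        have hPL : 0 < actProb (fun _ : Bool => (1:ℝ)/2) σ true := by
          rw [hAP]; nlinarith
        have hq3 : τ false true false = 1/2 := by
          rw [hcons true hPL false false, hAP, hx, hy]
          norm_num
        have hc : σ false true = 0 := by
          apply hdr.2
          rw [hq3]
          have hb := dDis_bounds false (τ false false false)
          rw [dDis_false_pos (Or.inl rfl)]
          linarith
        rw [hy] at hc; norm_num at hc
      · -- interior
        have hPL : 0 < actProb (fun _ : Bool => (1:ℝ)/2) σ true := by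
          rw [hAP]; linarith
        have hPR : 0 < actProb (fun _ : Bool => (1:ℝ)/2) σ false := by
          rw [hAP, show σ true false = 1 - σ true true by linarith,
            show σ false false = 1 - σ false true by linarith]
          linarith
        have hPL' : 0 < 1/2 * σ true true + 1/2 * σ false true := by rw [← hAP]; exact hPL
        have hPR' : 0 < 1/2 * σ true false + 1/2 * σ false false := by rw [← hAP]; exact hPR
        have hq1 : ∀ t, τ t true false = σ false true / (σ true true + σ false true) := by
          intro t
          rw [hcons true hPL t false, hAP,
            div_eq_div_iff (by linarith) (by linarith)]
          ring
        have hq2 : ∀ t, τ t false false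
            = (1 - σ false true) / (2 - σ true true - σ false true) := by
          intro t
          rw [hcons false hPR t false, hAP,
            show σ true false = 1 - σ true true by linarith,
            show σ false false = 1 - σ false true by linarith,
            div_eq_div_iff (by linarith) (by linarith)]
          ring
        set pL := σ false true / (σ true true + σ false true) with hpLdef
        set pR := (1 - σ false true) / (2 - σ true true - σ false true) with hpRdef
        rw [hq1 true, hq2 true] at hdl
        rw [hq1 false, hq2 false] at hdr
        have hbL := dDis_bounds true pR
        have hbR := dDis_bounds false pL
        have hx01 : σ true true = 0 ∨ σ true true = 1 := by
          by_cases c1 : pL = 1/2 ∨ pL = 0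
          · by_cases c2 : pR = 1/2 ∨ pR = 0
            · right
              apply hdl.1
              rw [dDis_true_pos c1,
                dDis_true_pos c2]
              norm_num
            · left
              apply hdl.2
              rw [dDis_true_pos c1,
                dDis_true_neg c2]
              norm_num
          · right
            apply hdl.1
            rw [dDis_true_neg c1]
            linarith
        have hy01 : σ false true = 0 ∨ σ false true = 1 := by
          by_cases c4 : pR = 1/2 ∨ pR = 1
          · by_cases c3 : pL = 1/2 ∨ pL = 1
            · left
              apply hdr.2
              rw [dDis_false_pos c3,
                dDis_false_pos c4]
              norm_num
            · right
              apply hdr.1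
              rw [dDis_false_neg c3,
                dDis_false_pos c4]
              norm_num
          · left
            apply hdr.2
            rw [dDis_false_neg c4]
            linarith
        rcases hx01 with hx | hx <;> rcases hy01 with hy | hy
        · rw [hx, hy] at hxyp; norm_num at hxyp
        · -- (0,1): pL = 1, ℓ strictly prefers L
          have hpL1 : pL = 1 := by rw [hpLdef, hx, hy]; norm_num
          have hc : σ true true = 1 := by
            apply hdl.1
            rw [hpL1, show dDis true (1:ℝ) = 0 from dDis_true_neg (by norm_num)]
            linarith
          rw [hx] at hc; norm_num at hc
        · -- (1,0): pL = 0, pR = 1, ℓ strictly prefers R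
          have hpL0 : pL = 0 := by rw [hpLdef, hx, hy]; norm_num
          have hpR1 : pR = 1 := by rw [hpRdef, hx, hy]; norm_num
          have hc : σ true true = 0 := by
            apply hdl.2
            rw [hpL0, hpR1, show dDis true (0:ℝ) = -2 from dDis_true_pos (Or.inr rfl),
              show dDis true (1:ℝ) = 0 from dDis_true_neg (by norm_num)]
            norm_num
          rw [hx] at hc; norm_num at hc
        · rw [hx, hy] at hxylt; norm_num at hxylt
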